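/- Let M be a sufficient n×n matrix, A = [I, −M] ∈ ℝ^{n×2n}, and let B₁, B₂ be complementary bases whose complementary cones 𝒞(B₁) and 𝒞(B₂) satisfy dim(𝒞(B₁) ∩ 𝒞(B₂)) = n−1. Then |B₁ ∩ B₂| ≥ n−2. -/

import Mathlib

open Matrix

/-- `M` is column sufficient. -/
def ColSuff {n : ℕ} (M : Matrix (Fin n) (Fin n) ℝ) : Prop :=
  ∀ z : Fin n → ℝ, (∀ i, z i * M.mulVec z i ≤ 0) → ∀ i, z i * M.mulVec z i = 0

/-- `M` is sufficient: both `M` and `Mᵀ` are column sufficient. -/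
def Suff {n : ℕ} (M : Matrix (Fin n) (Fin n) ℝ) : Prop := ColSuff M ∧ ColSuff Mᵀ

/-- The matrix `A = [I, -M]`, with columns indexed by `Fin n ⊕ Fin n`. -/
def Amat {n : ℕ} (M : Matrix (Fin n) (Fin n) ℝ) : Matrix (Fin n) (Fin n ⊕ Fin n) ℝ :=
  Matrix.fromCols 1 (-M)

/-- The complementary index. -/
def bar {n : ℕ} : Fin n ⊕ Fin n → Fin n ⊕ Fin n
  | .inl i => .inr i
  | .inr i => .inl i

/-- `B` is a basis of `A = [I, -M]`: `n` linearly independent columns. -/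
def IsBasis {n : ℕ} (M : Matrix (Fin n) (Fin n) ℝ) (B : Finset (Fin n ⊕ Fin n)) : Prop :=
  B.card = n ∧ LinearIndependent ℝ (fun j : B => (Amat M)ᵀ (j : Fin n ⊕ Fin n))

/-- A complementary basis: a basis containing exactly one of each complementary pair. -/
def IsComplBasis {n : ℕ} (M : Matrix (Fin n) (Fin n) ℝ) (B : Finset (Fin n ⊕ Fin n)) : Prop :=
  IsBasis M B ∧ ∀ i : Fin n, Xor' (Sum.inl i ∈ B) (Sum.inr i ∈ B)

/-- The complementary cone `𝒞(J)`: nonnegative combinations of the columns of `A` indexed by `J`. -/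
def coneOf {n : ℕ} (M : Matrix (Fin n) (Fin n) ℝ) (J : Finset (Fin n ⊕ Fin n)) :
    Set (Fin n → ℝ) :=
  {y | ∃ c : Fin n ⊕ Fin n → ℝ, (∀ j, 0 ≤ c j) ∧ (∀ j ∉ J, c j = 0) ∧ y = (Amat M).mulVec c}

lemma bar_invol {n : ℕ} (j : Fin n ⊕ Fin n) : bar (bar j) = j := by cases j <;> rfl

lemma bar_inj {n : ℕ} : Function.Injective (bar (n := n)) :=
  Function.LeftInverse.injective bar_invol

lemma Amat_mulVec {n : ℕ} (M : Matrix (Fin n) (Fin n) ℝ) (c : Fin n ⊕ Fin n → ℝ) :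
    (Amat M).mulVec c = (fun i => c (Sum.inl i)) - M.mulVec (fun i => c (Sum.inr i)) := by
  have h : Sum.elim (fun i => c (Sum.inl i)) (fun i => c (Sum.inr i)) = c := by
    funext j; cases j <;> rfl
  have h2 := Matrix.fromCols_mulVec_sumElim (1 : Matrix (Fin n) (Fin n) ℝ) (-M)
    (fun i => c (Sum.inl i)) (fun i => c (Sum.inr i))
  rw [h, Matrix.one_mulVec, Matrix.neg_mulVec] at h2
  rw [Amat, h2, sub_eq_add_neg]

lemma key_orth {n : ℕ} {M : Matrix (Fin n) (Fin n) ℝ}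
    (hM : ∀ z : Fin n → ℝ, (∀ i, z i * M.mulVec z i ≤ 0) → ∀ i, z i * M.mulVec z i = 0)
    {B₁ B₂ : Finset (Fin n ⊕ Fin n)}
    (h₁ : ∀ i : Fin n, Xor' (Sum.inl i ∈ B₁) (Sum.inr i ∈ B₁))
    (h₂ : ∀ i : Fin n, Xor' (Sum.inl i ∈ B₂) (Sum.inr i ∈ B₂))
    {c₁ c₂ : Fin n ⊕ Fin n → ℝ}
    (hc₁ : ∀ j, 0 ≤ c₁ j) (hs₁ : ∀ j ∉ B₁, c₁ j = 0)
    (hc₂ : ∀ j, 0 ≤ c₂ j) (hs₂ : ∀ j ∉ B₂, c₂ j = 0)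
    (heq : (Amat M).mulVec c₁ = (Amat M).mulVec c₂) :
    ∀ j, c₁ j * c₂ (bar j) = 0 := by
  have compl₁ : ∀ i : Fin n, c₁ (Sum.inl i) * c₁ (Sum.inr i) = 0 := by
    intro i
    rcases h₁ i with ⟨_, hr⟩ | ⟨_, hl⟩
    · rw [hs₁ _ hr, mul_zero]
    · rw [hs₁ _ hl, zero_mul]
  have compl₂ : ∀ i : Fin n, c₂ (Sum.inl i) * c₂ (Sum.inr i) = 0 := by
    intro i
    rcases h₂ i with ⟨_, hr⟩ | ⟨_, hl⟩
    · rw [hs₂ _ hr, mul_zero]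
    · rw [hs₂ _ hl, zero_mul]
  set z : Fin n → ℝ := fun i => c₁ (Sum.inr i) - c₂ (Sum.inr i) with hz
  have hMz : M.mulVec z = fun i => c₁ (Sum.inl i) - c₂ (Sum.inl i) := by
    rw [Amat_mulVec, Amat_mulVec] at heq
    have : M.mulVec z =
        M.mulVec (fun i => c₁ (Sum.inr i)) - M.mulVec (fun i => c₂ (Sum.inr i)) := by
      rw [← Matrix.mulVec_sub]; rfl
    funext i
    have h := congrFun heq i
    simp only [Pi.sub_apply] at h
    rw [this]
    simp only [Pi.sub_apply]
    linarith
  have hid : ∀ i, z i * M.mulVec z i =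
      -(c₁ (Sum.inr i) * c₂ (Sum.inl i) + c₂ (Sum.inr i) * c₁ (Sum.inl i)) := by
    intro i
    rw [hMz]
    simp only [hz]
    have e₁ := compl₁ i
    have e₂ := compl₂ i
    ring_nf
    nlinarith [e₁, e₂]
  have hle : ∀ i, z i * M.mulVec z i ≤ 0 := by
    intro i
    rw [hid i]
    have := mul_nonneg (hc₁ (Sum.inr i)) (hc₂ (Sum.inl i))
    have := mul_nonneg (hc₂ (Sum.inr i)) (hc₁ (Sum.inl i))
    linarith
  have hzero := hM z hle
  have hboth : ∀ i, c₁ (Sum.inr i) * c₂ (Sum.inl i) = 0 ∧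
      c₂ (Sum.inr i) * c₁ (Sum.inl i) = 0 := by
    intro i
    have h0 := hzero i
    rw [hid i] at h0
    have h1 := mul_nonneg (hc₁ (Sum.inr i)) (hc₂ (Sum.inl i))
    have h2 := mul_nonneg (hc₂ (Sum.inr i)) (hc₁ (Sum.inl i))
    constructor <;> linarith
  intro j
  cases j with
  | inl i => have := (hboth i).2; show c₁ (Sum.inl i) * c₂ (Sum.inr i) = 0; linarith [this]
  | inr i => have := (hboth i).1; show c₁ (Sum.inr i) * c₂ (Sum.inl i) = 0; linarith [this]

lemma mulVec_mem_span' {n : ℕ} (A : Matrix (Fin n) (Fin n ⊕ Fin n) ℝ)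
    (c : Fin n ⊕ Fin n → ℝ) (J : Finset (Fin n ⊕ Fin n)) (h : ∀ j ∉ J, c j = 0) :
    A.mulVec c ∈ Submodule.span ℝ (Aᵀ '' (J : Set (Fin n ⊕ Fin n))) := by
  have hsum : A.mulVec c = ∑ j ∈ J, c j • Aᵀ j := by
    funext i
    rw [Finset.sum_apply]
    simp only [Pi.smul_apply, smul_eq_mul, Matrix.transpose_apply]
    rw [Matrix.mulVec, dotProduct]
    rw [← Finset.sum_subset (Finset.subset_univ J) (fun j _ hj => by rw [h j hj, mul_zero])]
    exact Finset.sum_congr rfl fun j _ => mul_comm _ _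
  rw [hsum]
  exact Submodule.sum_mem _ fun j hj =>
    Submodule.smul_mem _ _ (Submodule.subset_span ⟨j, hj, rfl⟩)

lemma cone_cover {ι V : Type*} [AddCommGroup V] [Module ℝ V] (W : ι → Submodule ℝ V)
    (C : Set V) (hadd : ∀ x ∈ C, ∀ y ∈ C, x + y ∈ C)
    (hsmul : ∀ x ∈ C, ∀ t : ℝ, 0 < t → t • x ∈ C) :
    ∀ S : Finset ι, S.Nonempty → (∀ x ∈ C, ∃ i ∈ S, x ∈ W i) →
      ∃ i ∈ S, ∀ x ∈ C, x ∈ W i := by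
  intro S
  classical
  induction S using Finset.induction_on with
  | empty => intro h; exact absurd h (by simp)
  | @insert j S' hj IH =>
    intro _ hC
    by_cases hx : ∃ x₀ ∈ C, ∀ i ∈ S', x₀ ∉ W i
    · obtain ⟨x₀, hx₀C, hx₀⟩ := hx
      have hWj : ∀ i ∈ insert j S', x₀ ∈ W i → i = j := by
        intro i hi hWi
        rcases Finset.mem_insert.mp hi with h | h
        · exact h
        · exact absurd hWi (hx₀ i h)
      refine ⟨j, Finset.mem_insert_self _ _, fun x hxC => ?_⟩
      have hp : ∀ m : ℕ, x + ((m : ℝ) + 1) • x₀ ∈ C := fun m =>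
        hadd x hxC _ (hsmul x₀ hx₀C _ (by positivity))
      have hg : ∀ m : ℕ, ∃ i ∈ insert j S', x + ((m : ℝ) + 1) • x₀ ∈ W i := fun m =>
        hC _ (hp m)
      choose g hgmem hgW using hg
      obtain ⟨m₁, _, m₂, _, hne, hmeq⟩ := Finset.exists_ne_map_eq_of_card_lt_of_maps_to
        (s := Finset.range ((insert j S').card + 1)) (t := insert j S')
        (by rw [Finset.card_range]; omega) (fun m _ => hgmem m)
      have h1 := hgW m₁
      have h2 := hgW m₂
      rw [← hmeq] at h2
      have hdiff : ((m₁ : ℝ) - (m₂ : ℝ)) • x₀ ∈ W (g m₁) := by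
        have hsub := Submodule.sub_mem _ h1 h2
        have : (x + ((m₁ : ℝ) + 1) • x₀) - (x + ((m₂ : ℝ) + 1) • x₀)
            = ((m₁ : ℝ) - (m₂ : ℝ)) • x₀ := by
          rw [sub_smul]; ring_nf; module
        rwa [this] at hsub
      have hcast : (m₁ : ℝ) - (m₂ : ℝ) ≠ 0 := by
        rw [sub_ne_zero]
        exact_mod_cast hne
      have hx₀W : x₀ ∈ W (g m₁) := (Submodule.smul_mem_iff _ hcast).mp hdiff
      have hgj : g m₁ = j := hWj _ (hgmem m₁) hx₀W
      rw [hgj] at h1 hx₀W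
      have : x = (x + ((m₁ : ℝ) + 1) • x₀) - ((m₁ : ℝ) + 1) • x₀ := by abel
      rw [this]
      exact Submodule.sub_mem _ h1 (Submodule.smul_mem _ _ hx₀W)
    · push_neg at hx
      rcases Finset.eq_empty_or_nonempty S' with hS' | hS'
      · refine ⟨j, Finset.mem_insert_self _ _, fun x hxC => ?_⟩
        obtain ⟨i, hi, _⟩ := hx x hxC
        rw [hS'] at hi
        exact absurd hi (Finset.notMem_empty _)
      · obtain ⟨i, hi, h⟩ := IH hS' hx
        exact ⟨i, Finset.mem_insert_of_mem hi, h⟩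

theorem stmt_5 {n : ℕ} (M : Matrix (Fin n) (Fin n) ℝ) (hM : Suff M)
    (B₁ B₂ : Finset (Fin n ⊕ Fin n))
    (hB₁ : IsComplBasis M B₁) (hB₂ : IsComplBasis M B₂)
    (hadj : Module.finrank ℝ (vectorSpan ℝ (coneOf M B₁ ∩ coneOf M B₂)) = n - 1) :
    n - 2 ≤ (B₁ ∩ B₂).card := by
  classical
  rcases le_or_gt n 2 with hn | hn
  · calc n - 2 = 0 := by omega
      _ ≤ _ := Nat.zero_le _
  obtain ⟨⟨hcard₁, _⟩, hxor₁⟩ := hB₁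
  obtain ⟨⟨hcard₂, _⟩, hxor₂⟩ := hB₂
  set F : Set (Fin n → ℝ) := coneOf M B₁ ∩ coneOf M B₂ with hF
  set D : Finset (Fin n ⊕ Fin n) := B₁ \ B₂ with hD
  have hDB₁ : D ⊆ B₁ := Finset.sdiff_subset
  -- D's bar goes into B₂
  have hbarD : ∀ j ∈ D, bar j ∈ B₂ := by
    intro j hjD
    have hj₂ : j ∉ B₂ := (Finset.mem_sdiff.mp hjD).2
    cases j with
    | inl i =>
      rcases hxor₂ i with ⟨h, _⟩ | ⟨h, _⟩
      · exact absurd h hj₂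
      · exact h
    | inr i =>
      rcases hxor₂ i with ⟨h, _⟩ | ⟨h, _⟩
      · exact h
      · exact absurd h hj₂
  -- the family of subspaces
  set W : Finset (Fin n ⊕ Fin n) → Submodule ℝ (Fin n → ℝ) := fun T =>
    Submodule.span ℝ ((Amat M)ᵀ '' ((B₁ \ T : Finset _) : Set (Fin n ⊕ Fin n))) ⊓
    Submodule.span ℝ ((Amat M)ᵀ ''
      ((B₂ \ (D \ T).image bar : Finset _) : Set (Fin n ⊕ Fin n))) with hW
  -- closure properties of F
  have hadd : ∀ x ∈ F, ∀ y ∈ F, x + y ∈ F := by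
    rintro x ⟨⟨c, hc0, hcs, rfl⟩, ⟨d, hd0, hds, hxd⟩⟩ y ⟨⟨c', hc0', hcs', rfl⟩, ⟨d', hd0', hds', hyd⟩⟩
    constructor
    · exact ⟨c + c', fun j => add_nonneg (hc0 j) (hc0' j),
        fun j hj => by simp [hcs j hj, hcs' j hj],
        by rw [Matrix.mulVec_add]⟩
    · exact ⟨d + d', fun j => add_nonneg (hd0 j) (hd0' j),
        fun j hj => by simp [hds j hj, hds' j hj],
        by rw [Matrix.mulVec_add, ← hxd, ← hyd]⟩
  have hsmul : ∀ x ∈ F, ∀ t : ℝ, 0 < t → t • x ∈ F := by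
    rintro x ⟨⟨c, hc0, hcs, rfl⟩, ⟨d, hd0, hds, hxd⟩⟩ t ht
    constructor
    · exact ⟨t • c, fun j => mul_nonneg ht.le (hc0 j),
        fun j hj => by simp [hcs j hj],
        by rw [Matrix.mulVec_smul]⟩
    · exact ⟨t • d, fun j => mul_nonneg ht.le (hd0 j),
        fun j hj => by simp [hds j hj],
        by rw [Matrix.mulVec_smul, ← hxd]⟩
  -- covering
  have hcover : ∀ y ∈ F, ∃ T ∈ D.powerset, y ∈ W T := by
    rintro y ⟨⟨c₁, hc₁0, hc₁s, hy₁⟩, ⟨c₂, hc₂0, hc₂s, hy₂⟩⟩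
    have heq : (Amat M).mulVec c₁ = (Amat M).mulVec c₂ := by rw [← hy₁, ← hy₂]
    have horth := key_orth hM.1 hxor₁ hxor₂ hc₁0 hc₁s hc₂0 hc₂s heq
    refine ⟨D.filter (fun j => c₁ j = 0), Finset.mem_powerset.mpr (Finset.filter_subset _ _),
      ?_, ?_⟩
    · rw [hy₁]
      apply mulVec_mem_span'
      intro j hj
      by_cases hjB : j ∈ B₁
      · have hjT : j ∈ D.filter (fun j => c₁ j = 0) := by
          by_contra hc
          exact hj (Finset.mem_sdiff.mpr ⟨hjB, hc⟩)
        exact (Finset.mem_filter.mp hjT).2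
      · exact hc₁s j hjB
    · rw [hy₂]
      apply mulVec_mem_span'
      intro j hj
      by_cases hjB : j ∈ B₂
      · have hjI : j ∈ (D \ D.filter (fun j => c₁ j = 0)).image bar := by
          by_contra hc
          exact hj (Finset.mem_sdiff.mpr ⟨hjB, hc⟩)
        obtain ⟨j₀, hj₀, rfl⟩ := Finset.mem_image.mp hjI
        obtain ⟨hj₀D, hj₀T⟩ := Finset.mem_sdiff.mp hj₀
        have hne : c₁ j₀ ≠ 0 := fun h0 =>
          hj₀T (Finset.mem_filter.mpr ⟨hj₀D, h0⟩)
        have := horth j₀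
        rcases mul_eq_zero.mp this with h | h
        · exact absurd h hne
        · exact h
      · exact hc₂s j hjB
  -- apply the covering lemma
  obtain ⟨T, hTmem, hFW⟩ := cone_cover W F hadd hsmul D.powerset
    ⟨∅, Finset.empty_mem_powerset _⟩ hcover
  have hTD : T ⊆ D := Finset.mem_powerset.mp hTmem
  -- vectorSpan F ≤ W T
  have hvs : vectorSpan ℝ F ≤ W T := by
    rw [vectorSpan_def]
    rw [Submodule.span_le]
    rintro v hv
    rw [Set.mem_vsub] at hv
    obtain ⟨a, ha, b, hb, rfl⟩ := hv
    exact Submodule.sub_mem _ (hFW a ha) (hFW b hb)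
  -- dimension bounds
  have hdim : ∀ (J : Finset (Fin n ⊕ Fin n)),
      vectorSpan ℝ F ≤ Submodule.span ℝ ((Amat M)ᵀ '' (J : Set (Fin n ⊕ Fin n))) →
      n - 1 ≤ J.card := by
    intro J hle
    have h1 : Module.finrank ℝ (vectorSpan ℝ F) ≤
        Module.finrank ℝ (Submodule.span ℝ ((Amat M)ᵀ '' (J : Set (Fin n ⊕ Fin n)))) :=
      Submodule.finrank_mono (R := ℝ) hle
    have h2 : ((Amat M)ᵀ '' (J : Set (Fin n ⊕ Fin n))) =
        ((J.image (Amat M)ᵀ : Finset (Fin n → ℝ)) : Set (Fin n → ℝ)) := by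
      exact Finset.coe_image.symm
    rw [h2] at h1
    have h3 := finrank_span_finset_le_card (R := ℝ) (J.image (Amat M)ᵀ)
    have h4 := Finset.card_image_le (s := J) (f := (Amat M)ᵀ)
    rw [hadj] at h1
    calc n - 1 ≤ (J.image (Amat M)ᵀ).card := le_trans h1 h3
      _ ≤ J.card := h4
  have hb1 : n - 1 ≤ (B₁ \ T).card := hdim _ (le_trans hvs inf_le_left)
  have hb2 : n - 1 ≤ (B₂ \ (D \ T).image bar).card := hdim _ (le_trans hvs inf_le_right)
  -- cardinalities
  have hc1 : (B₁ \ T).card = n - T.card := by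
    rw [Finset.card_sdiff_of_subset (hTD.trans hDB₁), hcard₁]
  have himg : (D \ T).image bar ⊆ B₂ := by
    intro j hj
    obtain ⟨j₀, hj₀, rfl⟩ := Finset.mem_image.mp hj
    exact hbarD j₀ (Finset.mem_sdiff.mp hj₀).1
  have hc2 : (B₂ \ (D \ T).image bar).card = n - (D \ T).card := by
    rw [Finset.card_sdiff_of_subset himg, hcard₂, Finset.card_image_of_injective _ bar_inj]
  have hTcard : T.card ≤ D.card := Finset.card_le_card hTD
  have hDcard : D.card ≤ n := le_trans (Finset.card_le_card hDB₁) (le_of_eq hcard₁)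
  have hDT : (D \ T).card = D.card - T.card := Finset.card_sdiff_of_subset hTD
  have hkey : D.card ≤ 2 := by omega
  have hsplit : D.card + (B₁ ∩ B₂).card = n := by
    rw [hD, Finset.card_sdiff_add_card_inter, hcard₁]
  omega
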